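/- Let D be a (t, γ)-wise independent distribution on {0,1}^n, meaning every restriction of D to t coordinates is γ-close in statistical distance to uniform on {0,1}^t. Then there exists a (perfectly) t-wise independent distribution on {0,1}^n that is n^t·γ-close to D in statistical distance. -/

import Mathlib

open Finset Real
open scoped BigOperators Classical

/-- Bit strings of length `n`. -/
abbrev BS (n : ℕ) := Fin n → Bool

/-- `p` is a probability distribution on the finite type `Ω`. -/
def IsDist {Ω : Type*} [Fintype Ω] (p : Ω → ℝ) : Prop :=
  (∀ x, 0 ≤ p x) ∧ ∑ x, p x = 1

/-- Statistical distance between two distributions on a finite type. -/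
noncomputable def SD {Ω : Type*} [Fintype Ω] (p q : Ω → ℝ) : ℝ :=
  (∑ x, |p x - q x|) / 2

/-- The uniform distribution on a finite type. -/
noncomputable def unif (Ω : Type*) [Fintype Ω] : Ω → ℝ := fun _ => (Fintype.card Ω : ℝ)⁻¹

/-- Distribution of the random variable `X` on the finite probability space `(Ω, μ)`. -/
noncomputable def prDist {Ω A : Type*} [Fintype Ω] (μ : Ω → ℝ) (X : Ω → A) : A → ℝ :=
  fun a => ∑ ω ∈ univ.filter (fun ω => X ω = a), μ ω

/-- Min-entropy (base 2) of a distribution on a finite type. -/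
noncomputable def minEnt {A : Type*} [Fintype A] (p : A → ℝ) : ℝ :=
  - Real.logb 2 (⨆ a, p a)

/-- Conditional distribution of `X` given `W = w`. -/
noncomputable def condDist {Ω A B : Type*} [Fintype Ω] (μ : Ω → ℝ)
    (X : Ω → A) (W : Ω → B) (w : B) : A → ℝ :=
  fun a => prDist μ (fun ω => (X ω, W ω)) (a, w) / prDist μ W w

/-- Average conditional min-entropy `H̃∞(X | W)`. -/
noncomputable def avgCondMinEnt {Ω A B : Type*} [Fintype Ω] [Fintype A] [Fintype B]
    (μ : Ω → ℝ) (X : Ω → A) (W : Ω → B) : ℝ :=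
  - Real.logb 2 (∑ w, ⨆ a, prDist μ (fun ω => (X ω, W ω)) (a, w))

/-- First marginal of a joint distribution. -/
noncomputable def margFst {A B : Type*} [Fintype A] [Fintype B] (μ : A × B → ℝ) : A → ℝ :=
  fun a => ∑ b, μ (a, b)

/-- Second marginal of a joint distribution. -/
noncomputable def margSnd {A B : Type*} [Fintype A] [Fintype B] (μ : A × B → ℝ) : B → ℝ :=
  fun b => ∑ a, μ (a, b)

/-- Projection of a distribution on `r`-bit strings to the coordinates in `T`. -/
noncomputable def projDist {r : ℕ} (μ : (Fin r → Bool) → ℝ) (T : Finset (Fin r)) :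
    ({x // x ∈ T} → Bool) → ℝ :=
  fun w => ∑ z ∈ univ.filter (fun z : Fin r → Bool => ∀ i : {x // x ∈ T}, z i.1 = w i), μ z

/-- `Ext` is a strong seeded `(k, ε)`-extractor. -/
def IsStrongExt (n d m : ℕ) (k ε : ℝ) (Ext : BS n → BS d → BS m) : Prop :=
  ∀ p : BS n → ℝ, IsDist p → k ≤ minEnt p →
    SD (fun wy : BS m × BS d =>
          ∑ x ∈ univ.filter (fun x => Ext x wy.2 = wy.1), p x * unif (BS d) wy.2)
       (fun wy => unif (BS m) wy.1 * unif (BS d) wy.2) ≤ ε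

/-- `Ext` is a strong average-case seeded `(k, ε)`-extractor. -/
def IsStrongAvgExt (n d m : ℕ) (k ε : ℝ) (Ext : BS n → BS d → BS m) : Prop :=
  ∀ (T : Type) [Fintype T], ∀ μ : BS n × T → ℝ, IsDist μ →
    k ≤ avgCondMinEnt μ Prod.fst Prod.snd →
    SD (fun wyz : BS m × BS d × T =>
          ∑ x ∈ univ.filter (fun x => Ext x wyz.2.1 = wyz.1), μ (x, wyz.2.2) * unif (BS d) wyz.2.1)
       (fun wyz => unif (BS m) wyz.1 * unif (BS d) wyz.2.1 * margSnd μ wyz.2.2) ≤ ε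

/-- `M` is an `(L, 1, 0, ε, ε')`-non-malleable independence preserving merger
(single tampering adversary, uniform seed). -/
def IsNIPM1 (L m d m₁ : ℕ) (ε ε' : ℝ)
    (M : (Fin L → BS m) → BS d → BS m₁) : Prop :=
  ∀ (Ω : Type) [Fintype Ω], ∀ μ : Ω → ℝ, IsDist μ →
    ∀ (X X' : Ω → (Fin L → BS m)) (Y Y' : Ω → BS d),
      (∀ a b, prDist μ (fun ω => ((X ω, X' ω), (Y ω, Y' ω))) (a, b)
          = prDist μ (fun ω => (X ω, X' ω)) a * prDist μ (fun ω => (Y ω, Y' ω)) b) →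
      (d : ℝ) ≤ minEnt (prDist μ Y) →
      (∀ i : Fin L, SD (prDist μ (fun ω => X ω i)) (unif (BS m)) ≤ ε) →
      (∃ h : Fin L, SD (prDist μ (fun ω => (X ω h, X' ω h)))
          (fun p => unif (BS m) p.1 * prDist μ (fun ω => X' ω h) p.2) ≤ ε) →
      SD (prDist μ (fun ω => (M (X ω) (Y ω), M (X' ω) (Y' ω))))
         (fun p => unif (BS m₁) p.1 * prDist μ (fun ω => M (X' ω) (Y' ω)) p.2) ≤ ε'

set_option linter.unusedSectionVars false
open scoped symmDiff

noncomputable section AGMaux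

namespace AGMaux

variable {ι : Type*} [Fintype ι] [DecidableEq ι]

def eps (b : Bool) : ℝ := if b then -1 else 1

@[simp] lemma abs_eps (b : Bool) : |eps b| = 1 := by cases b <;> simp [eps]

@[simp] lemma eps_mul_self (b : Bool) : eps b * eps b = 1 := by cases b <;> norm_num [eps]

@[simp] lemma eps_not (b : Bool) : eps (!b) = -eps b := by cases b <;> simp [eps]

def chi (S : Finset ι) (x : ι → Bool) : ℝ := ∏ i ∈ S, eps (x i)

@[simp] lemma chi_empty (x : ι → Bool) : chi (∅ : Finset ι) x = 1 := by simp [chi]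

@[simp] lemma abs_chi (S : Finset ι) (x : ι → Bool) : |chi S x| = 1 := by
  rw [chi, Finset.abs_prod]
  simp

lemma chi_mul_self (S : Finset ι) (x : ι → Bool) : chi S x * chi S x = 1 := by
  rw [chi, ← Finset.prod_mul_distrib]
  simp

def flip (i : ι) (x : ι → Bool) : ι → Bool := Function.update x i (!(x i))

@[simp] lemma flip_apply_self (i : ι) (x : ι → Bool) : flip i x i = !(x i) := by
  simp [flip]

lemma flip_apply_ne (i j : ι) (x : ι → Bool) (h : j ≠ i) : flip i x j = x j := by
  simp [flip, Function.update_of_ne h]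

lemma flip_involutive (i : ι) : Function.Involutive (flip i) := by
  intro x
  funext j
  by_cases h : j = i
  · subst h; simp
  · rw [flip_apply_ne _ _ _ h, flip_apply_ne _ _ _ h]

def flipEquiv (i : ι) : (ι → Bool) ≃ (ι → Bool) := (flip_involutive i).toPerm _

lemma sum_flip (i : ι) (F : (ι → Bool) → ℝ) : ∑ x, F (flip i x) = ∑ x, F x :=
  Fintype.sum_equiv (flipEquiv i) _ _ (fun _ => rfl)

lemma sum_eq_zero_of_flip_neg {i : ι} {F : (ι → Bool) → ℝ}
    (h : ∀ x, F (flip i x) = -F x) : ∑ x, F x = 0 := by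
  have h1 : ∑ x, F x = ∑ x, F (flip i x) := (sum_flip i F).symm
  have h2 : ∑ x, F (flip i x) = -∑ x, F x := by
    rw [← Finset.sum_neg_distrib]
    exact Finset.sum_congr rfl fun x _ => h x
  linarith [h1, h2]

lemma chi_flip (S : Finset ι) (i : ι) (x : ι → Bool) :
    chi S (flip i x) = (if i ∈ S then -1 else 1) * chi S x := by
  by_cases hi : i ∈ S
  · rw [if_pos hi, chi, chi, ← Finset.mul_prod_erase S _ hi, ← Finset.mul_prod_erase S _ hi]
    have : ∏ j ∈ S.erase i, eps (flip i x j) = ∏ j ∈ S.erase i, eps (x j) := by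
      refine Finset.prod_congr rfl fun j hj => ?_
      rw [flip_apply_ne _ _ _ (Finset.ne_of_mem_erase hj)]
    rw [this, flip_apply_self, eps_not]
    ring
  · rw [if_neg hi, one_mul, chi, chi]
    refine Finset.prod_congr rfl fun j hj => ?_
    rw [flip_apply_ne _ _ _ (by rintro rfl; exact hi hj)]

lemma sum_chi_mul_chi (S R : Finset ι) (hne : S ≠ R) : ∑ x, chi S x * chi R x = 0 := by
  have hsd : (S ∆ R).Nonempty := Finset.symmDiff_nonempty.mpr hne
  obtain ⟨i, hi⟩ := hsd
  rw [Finset.mem_symmDiff] at hi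
  refine sum_eq_zero_of_flip_neg (i := i) fun x => ?_
  rw [chi_flip, chi_flip]
  rcases hi with ⟨h1, h2⟩ | ⟨h1, h2⟩
  · rw [if_pos h1, if_neg h2]; ring
  · rw [if_neg h2, if_pos h1]; ring

lemma sum_chi (S : Finset ι) (hS : S.Nonempty) : ∑ x, chi S x = 0 := by
  have := sum_chi_mul_chi S ∅ (by simpa using hS.ne_empty)
  simpa using this

lemma sum_chi_mul_chi_self (S : Finset ι) :
    ∑ x : ι → Bool, chi S x * chi S x = (2 : ℝ) ^ (Fintype.card ι) := by
  have : ∀ x : ι → Bool, chi S x * chi S x = 1 := chi_mul_self S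
  rw [Finset.sum_congr rfl fun x _ => this x]
  rw [Finset.sum_const, Finset.card_univ, Fintype.card_fun]
  simp

def bias (μ : (ι → Bool) → ℝ) (S : Finset ι) : ℝ := ∑ x, μ x * chi S x

end AGMaux

-- ### Stage 2: projections

namespace AGMaux

variable {n : ℕ}

/-- restriction map -/
def res (T : Finset (Fin n)) (z : BS n) : {x // x ∈ T} → Bool := fun i => z i.1

def lift (T S : Finset (Fin n)) : Finset {x // x ∈ T} :=
  Finset.univ.filter (fun i : {x // x ∈ T} => i.1 ∈ S)

lemma chi_lift {T S : Finset (Fin n)} (hST : S ⊆ T) (z : BS n) :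
    chi (lift T S) (res T z) = chi S z := by
  unfold chi lift res
  refine Finset.prod_bij (fun i _ => i.1) ?_ ?_ ?_ ?_
  · intro a ha
    simpa using (Finset.mem_filter.mp ha).2
  · intro a _ b _ hab
    exact Subtype.ext hab
  · intro j hj
    exact ⟨⟨j, hST hj⟩, by simp [hj], rfl⟩
  · intro a _
    rfl

lemma lift_nonempty {T S : Finset (Fin n)} (hST : S ⊆ T) (hS : S.Nonempty) :
    (lift T S).Nonempty := by
  obtain ⟨i, hi⟩ := hS
  exact ⟨⟨i, hST hi⟩, by simp [lift, hi]⟩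

lemma projDist_apply (μ : BS n → ℝ) (T : Finset (Fin n)) (w : {x // x ∈ T} → Bool) :
    projDist μ T w = ∑ z ∈ Finset.univ.filter (fun z => res T z = w), μ z := by
  unfold projDist
  congr 1
  apply Finset.filter_congr
  intro z _
  simp [res, funext_iff]

lemma sum_projDist (μ : BS n → ℝ) (T : Finset (Fin n)) :
    ∑ w, projDist μ T w = ∑ z, μ z := by
  simp_rw [projDist_apply]
  exact Finset.sum_fiberwise Finset.univ (res T) μ

lemma bias_eq_proj (μ : BS n → ℝ) {T S : Finset (Fin n)} (hST : S ⊆ T) :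
    bias μ S = ∑ w, projDist μ T w * chi (lift T S) w := by
  have step : ∀ w, projDist μ T w * chi (lift T S) w
      = ∑ z ∈ Finset.univ.filter (fun z => res T z = w), μ z * chi S z := by
    intro w
    rw [projDist_apply, Finset.sum_mul]
    refine Finset.sum_congr rfl fun z hz => ?_
    have hz' : res T z = w := (Finset.mem_filter.mp hz).2
    rw [← hz', chi_lift hST]
  rw [Finset.sum_congr rfl fun w _ => step w, bias]
  exact (Finset.sum_fiberwise Finset.univ (res T) (fun z => μ z * chi S z)).symm

lemma abs_bias_le (μ : BS n → ℝ) {T S : Finset (Fin n)} (hST : S ⊆ T) (hS : S.Nonempty) :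
    |bias μ S| ≤ 2 * SD (projDist μ T) (unif ({x // x ∈ T} → Bool)) := by
  have hb := bias_eq_proj μ hST
  have hzero : ∑ w, unif ({x // x ∈ T} → Bool) w * chi (lift T S) w = 0 := by
    simp only [unif]
    rw [← Finset.mul_sum, sum_chi _ (lift_nonempty hST hS), mul_zero]
  have hb2 : bias μ S
      = ∑ w, (projDist μ T w - unif ({x // x ∈ T} → Bool) w) * chi (lift T S) w := by
    rw [hb, ← sub_zero (∑ w, projDist μ T w * chi (lift T S) w), ← hzero,
      ← Finset.sum_sub_distrib]
    refine Finset.sum_congr rfl fun w _ => by ring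
  rw [hb2]
  calc |∑ w, (projDist μ T w - unif ({x // x ∈ T} → Bool) w) * chi (lift T S) w|
      ≤ ∑ w, |(projDist μ T w - unif ({x // x ∈ T} → Bool) w) * chi (lift T S) w| :=
        Finset.abs_sum_le_sum_abs _ _
    _ = ∑ w, |projDist μ T w - unif ({x // x ∈ T} → Bool) w| := by
        refine Finset.sum_congr rfl fun w _ => ?_
        rw [abs_mul, abs_chi, mul_one]
    _ = 2 * SD (projDist μ T) (unif ({x // x ∈ T} → Bool)) := by
        rw [SD]; ring

lemma eq_ite_eps (a b : Bool) : (if a = b then (1:ℝ) else 0) = (eps a * eps b + 1) / 2 := by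
  cases a <;> cases b <;> norm_num [eps]

lemma card_fun_subtype (T : Finset (Fin n)) :
    (Fintype.card ({x // x ∈ T} → Bool) : ℝ) = (2 : ℝ) ^ T.card := by
  rw [Fintype.card_fun, Fintype.card_coe, Fintype.card_bool]
  push_cast
  ring

lemma proj_eq_unif (ν : BS n → ℝ) (T : Finset (Fin n)) (hmass : ∑ z, ν z = 1)
    (hb : ∀ S : Finset (Fin n), S ⊆ T → S.Nonempty → bias ν S = 0) :
    projDist ν T = unif ({x // x ∈ T} → Bool) := by
  funext w
  have expand : ∀ z : BS n, ∏ i : {x // x ∈ T}, (eps (z i.1) * eps (w i) + 1)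
      = ∑ R ∈ (Finset.univ : Finset {x // x ∈ T}).powerset,
          chi (R.image Subtype.val) z * chi R w := by
    intro z
    rw [Finset.prod_add]
    refine Finset.sum_congr rfl fun R _ => ?_
    rw [Finset.prod_const_one, mul_one, Finset.prod_mul_distrib]
    congr 1
    rw [chi, Finset.prod_image (fun a _ b _ hab => Subtype.ext hab)]
  have key : ∀ z : BS n, (if (∀ i : {x // x ∈ T}, z i.1 = w i) then (1:ℝ) else 0)
      = ((2:ℝ) ^ T.card)⁻¹ *
        ∑ R ∈ (Finset.univ : Finset {x // x ∈ T}).powerset,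
          chi (R.image Subtype.val) z * chi R w := by
    intro z
    calc (if (∀ i : {x // x ∈ T}, z i.1 = w i) then (1:ℝ) else 0)
        = ∏ i : {x // x ∈ T}, (if z i.1 = w i then (1:ℝ) else 0) := (Fintype.prod_boole).symm
      _ = ∏ i : {x // x ∈ T}, ((eps (z i.1) * eps (w i) + 1) / 2) :=
          Finset.prod_congr rfl fun i _ => eq_ite_eps _ _
      _ = (∏ i : {x // x ∈ T}, (eps (z i.1) * eps (w i) + 1)) / 2 ^ T.card := by
          rw [Finset.prod_div_distrib, Finset.prod_const, Finset.card_univ, Fintype.card_coe]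
      _ = ((2:ℝ) ^ T.card)⁻¹ *
          ∑ R ∈ (Finset.univ : Finset {x // x ∈ T}).powerset,
            chi (R.image Subtype.val) z * chi R w := by
          rw [expand z, div_eq_inv_mul]
  have main : projDist ν T w = ((2:ℝ) ^ T.card)⁻¹ *
      ∑ R ∈ (Finset.univ : Finset {x // x ∈ T}).powerset,
        bias ν (R.image Subtype.val) * chi R w := by
    unfold projDist
    rw [Finset.sum_filter]
    have h1 : ∀ z : BS n, (if (∀ i : {x // x ∈ T}, z i.1 = w i) then ν z else 0)
        = ν z * (((2:ℝ) ^ T.card)⁻¹ *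
          ∑ R ∈ (Finset.univ : Finset {x // x ∈ T}).powerset,
            chi (R.image Subtype.val) z * chi R w) := by
      intro z
      rw [← key z]
      split <;> ring
    rw [Finset.sum_congr rfl fun z _ => h1 z]
    have h2 : ∀ z : BS n, ν z * (((2:ℝ) ^ T.card)⁻¹ *
          ∑ R ∈ (Finset.univ : Finset {x // x ∈ T}).powerset,
            chi (R.image Subtype.val) z * chi R w)
        = ((2:ℝ) ^ T.card)⁻¹ *
          ∑ R ∈ (Finset.univ : Finset {x // x ∈ T}).powerset,
            ν z * chi (R.image Subtype.val) z * chi R w := by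
      intro z
      simp only [Finset.mul_sum]
      exact Finset.sum_congr rfl fun R _ => by ring
    rw [Finset.sum_congr rfl fun z _ => h2 z, ← Finset.mul_sum]
    congr 1
    rw [Finset.sum_comm]
    refine Finset.sum_congr rfl fun R _ => ?_
    rw [bias, Finset.sum_mul]
  have hRsum : ∑ R ∈ (Finset.univ : Finset {x // x ∈ T}).powerset,
      bias ν (R.image Subtype.val) * chi R w = 1 := by
    rw [Finset.sum_eq_single_of_mem (∅ : Finset {x // x ∈ T})
      (Finset.empty_mem_powerset _)]
    · have : bias ν (Finset.image Subtype.val (∅ : Finset {x // x ∈ T})) = 1 := by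
        rw [Finset.image_empty, bias]
        simpa using hmass
      rw [this, chi_empty, mul_one]
    · intro R _ hRne
      have hRnonempty : R.Nonempty := Finset.nonempty_iff_ne_empty.mpr hRne
      have himg : (R.image Subtype.val).Nonempty := hRnonempty.image _
      have hsub : R.image Subtype.val ⊆ T := by
        intro j hj
        obtain ⟨i, _, rfl⟩ := Finset.mem_image.mp hj
        exact i.2
      rw [hb _ hsub himg, zero_mul]
  rw [main, hRsum, mul_one, unif, card_fun_subtype]

-- ### Stage 3: SD basics and the additive construction

lemma SD_nonneg {Ω : Type*} [Fintype Ω] (p q : Ω → ℝ) : 0 ≤ SD p q := by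
  unfold SD
  positivity

lemma SD_self {Ω : Type*} [Fintype Ω] (p : Ω → ℝ) : SD p p = 0 := by
  simp [SD]

lemma SD_triangle {Ω : Type*} [Fintype Ω] (p q r : Ω → ℝ) :
    SD p r ≤ SD p q + SD q r := by
  unfold SD
  rw [← add_div, div_le_div_iff_of_pos_right (by norm_num : (0:ℝ) < 2)]
  rw [← Finset.sum_add_distrib]
  refine Finset.sum_le_sum fun x _ => ?_
  calc |p x - r x| = |(p x - q x) + (q x - r x)| := by ring_nf
    _ ≤ |p x - q x| + |q x - r x| := abs_add_le _ _

lemma SD_le_of_sum_le {Ω : Type*} [Fintype Ω] {p q : Ω → ℝ} {c : ℝ}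
    (h : ∑ x, |p x - q x| ≤ 2 * c) : SD p q ≤ c := by
  unfold SD
  linarith

variable {n : ℕ}

section Construction

variable (μ : BS n → ℝ) (𝒮 : Finset (Finset (Fin n)))

/-- total correction cost -/
def Acost : ℝ := ∑ S ∈ 𝒮, |bias μ S|

/-- the added correction measure -/
def corr (x : BS n) : ℝ :=
  ∑ S ∈ 𝒮, ((2:ℝ) ^ n)⁻¹ * (|bias μ S| - bias μ S * chi S x)

/-- the corrected distribution -/
def nu (x : BS n) : ℝ := (μ x + corr μ 𝒮 x) / (1 + Acost μ 𝒮)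

lemma Acost_nonneg : 0 ≤ Acost μ 𝒮 := Finset.sum_nonneg fun S _ => abs_nonneg _

lemma corr_nonneg (x : BS n) : 0 ≤ corr μ 𝒮 x := by
  refine Finset.sum_nonneg fun S _ => ?_
  have h1 : bias μ S * chi S x ≤ |bias μ S| := by
    calc bias μ S * chi S x ≤ |bias μ S * chi S x| := le_abs_self _
      _ = |bias μ S| := by rw [abs_mul, abs_chi, mul_one]
  have h2 : (0:ℝ) ≤ ((2:ℝ) ^ n)⁻¹ := by positivity
  exact mul_nonneg h2 (by linarith)

lemma card_BS : (Fintype.card (BS n) : ℝ) = (2:ℝ) ^ n := by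
  rw [Fintype.card_fun, Fintype.card_bool, Fintype.card_fin]
  push_cast
  ring

lemma sum_corr (h𝒮 : ∀ S ∈ 𝒮, S.Nonempty) : ∑ x, corr μ 𝒮 x = Acost μ 𝒮 := by
  unfold corr Acost
  rw [Finset.sum_comm]
  refine Finset.sum_congr rfl fun S hS => ?_
  rw [← Finset.mul_sum]
  have : ∑ x : BS n, (|bias μ S| - bias μ S * chi S x)
      = (2:ℝ)^n * |bias μ S| - bias μ S * 0 := by
    rw [Finset.sum_sub_distrib, Finset.sum_const, ← Finset.mul_sum,
      ← sum_chi S (h𝒮 S hS)]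
    rw [Finset.card_univ]
    congr 1
    rw [nsmul_eq_mul, card_BS]
  rw [this, mul_zero, sub_zero, ← mul_assoc, inv_mul_cancel₀ (by positivity), one_mul]

lemma isDist_nu (hμ : IsDist μ) (h𝒮 : ∀ S ∈ 𝒮, S.Nonempty) : IsDist (nu μ 𝒮) := by
  have hA := Acost_nonneg μ 𝒮
  constructor
  · intro x
    exact div_nonneg (by linarith [hμ.1 x, corr_nonneg μ 𝒮 x]) (by linarith)
  · unfold nu
    rw [← Finset.sum_div, Finset.sum_add_distrib, hμ.2, sum_corr μ 𝒮 h𝒮]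
    field_simp

lemma bias_nu_eq_zero (h𝒮 : ∀ S ∈ 𝒮, S.Nonempty) {R : Finset (Fin n)} (hR : R ∈ 𝒮) :
    bias (nu μ 𝒮) R = 0 := by
  have hcorr : ∑ x, corr μ 𝒮 x * chi R x = - bias μ R := by
    calc ∑ x, corr μ 𝒮 x * chi R x
        = ∑ x, ∑ S ∈ 𝒮, ((2:ℝ) ^ n)⁻¹ * (|bias μ S| - bias μ S * chi S x) * chi R x := by
          refine Finset.sum_congr rfl fun x _ => ?_
          rw [corr, Finset.sum_mul]
      _ = ∑ S ∈ 𝒮, ∑ x, ((2:ℝ) ^ n)⁻¹ * (|bias μ S| - bias μ S * chi S x) * chi R x :=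
          Finset.sum_comm
      _ = ∑ S ∈ 𝒮, ((2:ℝ) ^ n)⁻¹ *
            (|bias μ S| * (∑ x, chi R x) - bias μ S * ∑ x, chi S x * chi R x) := by
          refine Finset.sum_congr rfl fun S _ => ?_
          trans (((2:ℝ) ^ n)⁻¹ * |bias μ S| * ∑ x, chi R x
            - ((2:ℝ) ^ n)⁻¹ * bias μ S * ∑ x, chi S x * chi R x)
          · rw [Finset.mul_sum, Finset.mul_sum, ← Finset.sum_sub_distrib]
            exact Finset.sum_congr rfl fun x _ => by ring
          · ring
      _ = - bias μ R := ?_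
    rw [Finset.sum_eq_single_of_mem R hR]
    · rw [sum_chi R (h𝒮 R hR), sum_chi_mul_chi_self, mul_zero, zero_sub]
      have : (Fintype.card (Fin n)) = n := Fintype.card_fin n
      rw [this]
      field_simp
    · intro S _ hSR
      rw [sum_chi R (h𝒮 R hR), sum_chi_mul_chi S R hSR, mul_zero, mul_zero, sub_zero, mul_zero]
  unfold bias nu
  have : ∀ x : BS n, (μ x + corr μ 𝒮 x) / (1 + Acost μ 𝒮) * chi R x
      = (μ x * chi R x + corr μ 𝒮 x * chi R x) / (1 + Acost μ 𝒮) := by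
    intro x; ring
  rw [Finset.sum_congr rfl fun x _ => this x, ← Finset.sum_div, Finset.sum_add_distrib]
  have hb : ∑ x, μ x * chi R x = bias μ R := rfl
  rw [hb, hcorr]
  simp

lemma SD_nu_le (hμ : IsDist μ) (h𝒮 : ∀ S ∈ 𝒮, S.Nonempty) :
    SD μ (nu μ 𝒮) ≤ Acost μ 𝒮 := by
  have hA := Acost_nonneg μ 𝒮
  have hA1 : (0:ℝ) < 1 + Acost μ 𝒮 := by linarith
  apply SD_le_of_sum_le
  have key : ∀ x : BS n, |μ x - nu μ 𝒮 x|
      = |Acost μ 𝒮 * μ x - corr μ 𝒮 x| / (1 + Acost μ 𝒮) := by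
    intro x
    have hx : μ x - nu μ 𝒮 x = (Acost μ 𝒮 * μ x - corr μ 𝒮 x) / (1 + Acost μ 𝒮) := by
      rw [nu]
      field_simp
      ring
    rw [hx, abs_div, abs_of_pos hA1]
  rw [Finset.sum_congr rfl fun x _ => key x, ← Finset.sum_div]
  rw [div_le_iff₀ hA1]
  have hbound : ∑ x, |Acost μ 𝒮 * μ x - corr μ 𝒮 x|
      ≤ ∑ x, (Acost μ 𝒮 * μ x + corr μ 𝒮 x) := by
    refine Finset.sum_le_sum fun x _ => ?_
    have h1 : |Acost μ 𝒮 * μ x - corr μ 𝒮 x| ≤ |Acost μ 𝒮 * μ x| + |corr μ 𝒮 x| :=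
      abs_sub _ _
    have h2 : |Acost μ 𝒮 * μ x| = Acost μ 𝒮 * μ x :=
      abs_of_nonneg (mul_nonneg hA (hμ.1 x))
    have h3 : |corr μ 𝒮 x| = corr μ 𝒮 x := abs_of_nonneg (corr_nonneg μ 𝒮 x)
    linarith
  have heq : ∑ x, (Acost μ 𝒮 * μ x + corr μ 𝒮 x) = 2 * Acost μ 𝒮 := by
    rw [Finset.sum_add_distrib, ← Finset.mul_sum, hμ.2, sum_corr μ 𝒮 h𝒮]
    ring
  calc ∑ x, |Acost μ 𝒮 * μ x - corr μ 𝒮 x| ≤ 2 * Acost μ 𝒮 := by rw [← heq]; exact hbound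
    _ ≤ 2 * Acost μ 𝒮 * (1 + Acost μ 𝒮) := by nlinarith

end Construction

-- ### Stage 4: the family of small sets and counting bounds

def Sfam (n t : ℕ) : Finset (Finset (Fin n)) :=
  (Finset.Icc 1 t).biUnion (fun s => Finset.powersetCard s (Finset.univ : Finset (Fin n)))

lemma mem_Sfam {n t : ℕ} {S : Finset (Fin n)} :
    S ∈ Sfam n t ↔ S.Nonempty ∧ S.card ≤ t := by
  simp only [Sfam, Finset.mem_biUnion, Finset.mem_Icc, Finset.mem_powersetCard]
  constructor
  · rintro ⟨s, ⟨h1, h2⟩, _, rfl⟩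
    exact ⟨Finset.one_le_card.mp h1, h2⟩
  · rintro ⟨h1, h2⟩
    exact ⟨S.card, ⟨Finset.one_le_card.mpr h1, h2⟩, Finset.subset_univ S, rfl⟩

lemma Sfam_nonempty {n t : ℕ} : ∀ S ∈ Sfam n t, S.Nonempty :=
  fun _ hS => (mem_Sfam.mp hS).1

lemma card_Sfam (n t : ℕ) : (Sfam n t).card = ∑ s ∈ Finset.Icc 1 t, n.choose s := by
  rw [Sfam, Finset.card_biUnion]
  · refine Finset.sum_congr rfl fun s _ => ?_
    rw [Finset.card_powersetCard, Finset.card_univ, Fintype.card_fin]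
  · intro s _ s' _ hne
    rw [Function.onFun, Finset.disjoint_left]
    intro S hS hS'
    exact hne ((Finset.mem_powersetCard.mp hS).2.symm.trans (Finset.mem_powersetCard.mp hS').2)

lemma nat_bound_three (n : ℕ) (hn : 3 ≤ n) :
    2 * (∑ s ∈ Finset.Icc 1 3, n.choose s) ≤ n ^ 3 := by
  have hexp : ∑ s ∈ Finset.Icc 1 3, n.choose s = n.choose 1 + n.choose 2 + n.choose 3 := by
    rw [show (3:ℕ) = 2 + 1 from rfl, Finset.sum_Icc_succ_top (by norm_num),
      show (2:ℕ) = 1 + 1 from rfl, Finset.sum_Icc_succ_top (by norm_num), Finset.Icc_self,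
      Finset.sum_singleton]
  have h1 : n.choose 1 = n := Nat.choose_one_right n
  have h2 : 2 * n.choose 2 ≤ n ^ 2 := by
    have := Nat.descFactorial_le_pow n 2
    rwa [Nat.descFactorial_eq_factorial_mul_choose] at this
  have h3 : 6 * n.choose 3 ≤ n ^ 3 := by
    have := Nat.descFactorial_le_pow n 3
    rwa [Nat.descFactorial_eq_factorial_mul_choose] at this
  rw [hexp]
  have key : 12 * (n + n.choose 2 + n.choose 3) ≤ 6 * n ^ 3 := by
    have hn3 : 12 * n + 6 * n ^ 2 ≤ 4 * n ^ 3 := by nlinarith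
    nlinarith [h2, h3]
  rw [h1] at *
  omega

lemma nat_bound (n t : ℕ) (ht : 3 ≤ t) (hn : 3 ≤ n) :
    2 * (∑ s ∈ Finset.Icc 1 t, n.choose s) ≤ n ^ t := by
  induction t, ht using Nat.le_induction with
  | base => exact nat_bound_three n hn
  | succ t ht IH =>
    rw [Finset.sum_Icc_succ_top (by omega : 1 ≤ t + 1)]
    have hC : 24 * n.choose (t+1) ≤ n ^ (t+1) := by
      have hf : 24 ≤ Nat.factorial (t+1) := by
        calc 24 = Nat.factorial 4 := rfl
          _ ≤ Nat.factorial (t+1) := Nat.factorial_le (by omega)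
      have hd := Nat.descFactorial_le_pow n (t+1)
      rw [Nat.descFactorial_eq_factorial_mul_choose] at hd
      calc 24 * n.choose (t+1) ≤ Nat.factorial (t+1) * n.choose (t+1) :=
            Nat.mul_le_mul_right _ hf
        _ ≤ n ^ (t+1) := hd
    have hpow : 12 * n ^ t ≤ 11 * n ^ (t+1) := by
      have : n ^ (t+1) = n ^ t * n := pow_succ n t
      have hp : 0 < n ^ t := pow_pos (by omega) t
      nlinarith
    linarith [IH, hC, hpow]

lemma Acost_le {n : ℕ} (μ : BS n → ℝ) (𝒮 : Finset (Finset (Fin n))) {γ : ℝ}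
    (h : ∀ S ∈ 𝒮, |bias μ S| ≤ 2 * γ) : Acost μ 𝒮 ≤ (𝒮.card : ℝ) * (2 * γ) := by
  unfold Acost
  calc ∑ S ∈ 𝒮, |bias μ S| ≤ ∑ S ∈ 𝒮, 2 * γ := Finset.sum_le_sum h
    _ = (𝒮.card : ℝ) * (2 * γ) := by rw [Finset.sum_const, nsmul_eq_mul]

-- ### Stage 5: the t = 2 case

lemma signF_abs (s1 s2 s3 : ℝ) (h1 : s1 = 1 ∨ s1 = -1) (h2 : s2 = 1 ∨ s2 = -1)
    (h3 : s3 = 1 ∨ s3 = -1) (a b : Bool) :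
    |s1 * eps a + s2 * eps b + s3 * (eps a * eps b) - s1 * s2 * s3| = 2 := by
  rcases h1 with rfl|rfl <;> rcases h2 with rfl|rfl <;> rcases h3 with rfl|rfl <;>
    cases a <;> cases b <;> norm_num [eps]

lemma sum_unif_one {Ω : Type*} [Fintype Ω] [Nonempty Ω] : ∑ w : Ω, unif Ω w = 1 := by
  simp only [unif, Finset.sum_const, Finset.card_univ, nsmul_eq_mul]
  rw [mul_inv_cancel₀]
  exact_mod_cast Fintype.card_ne_zero

lemma pair_bound {n : ℕ} (μ : BS n → ℝ) (hμ : IsDist μ) {γ : ℝ} (i j : Fin n) (hij : i ≠ j)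
    (hSD : SD (projDist μ {i, j}) (unif ({x // x ∈ ({i, j} : Finset (Fin n))} → Bool)) ≤ γ) :
    |bias μ {i}| + |bias μ {j}| + |bias μ {i, j}| ≤ 4 * γ := by
  set T : Finset (Fin n) := {i, j} with hT
  have hiT : i ∈ T := by simp [hT]
  have hjT : j ∈ T := by simp [hT]
  set I : {x // x ∈ T} := ⟨i, hiT⟩ with hI
  set J : {x // x ∈ T} := ⟨j, hjT⟩ with hJ
  have hIJ : I ≠ J := fun hc => hij (congrArg Subtype.val hc)
  -- lifts
  have lift1 : lift T {i} = ({I} : Finset {x // x ∈ T}) := by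
    ext a
    simp only [lift, Finset.mem_filter, Finset.mem_univ, true_and, Finset.mem_singleton]
    constructor
    · intro ha; exact Subtype.ext ha
    · rintro rfl; rfl
  have lift2 : lift T {j} = ({J} : Finset {x // x ∈ T}) := by
    ext a
    simp only [lift, Finset.mem_filter, Finset.mem_univ, true_and, Finset.mem_singleton]
    constructor
    · intro ha; exact Subtype.ext ha
    · rintro rfl; rfl
  have lift3 : lift T T = ({I, J} : Finset {x // x ∈ T}) := by
    ext a
    simp only [lift, Finset.mem_filter, Finset.mem_univ, true_and, Finset.mem_insert,
      Finset.mem_singleton]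
    constructor
    · intro _
      have ha : (a : Fin n) ∈ ({i, j} : Finset (Fin n)) := by rw [← hT]; exact a.2
      simp only [Finset.mem_insert, Finset.mem_singleton] at ha
      rcases ha with h | h
      · exact Or.inl (Subtype.ext h)
      · exact Or.inr (Subtype.ext h)
    · intro _
      exact a.2
  -- bias representations
  have hsub1 : ({i} : Finset (Fin n)) ⊆ T := by simp [hT]
  have hsub2 : ({j} : Finset (Fin n)) ⊆ T := by simp [hT]
  have hb1 := bias_eq_proj μ hsub1
  have hb2 := bias_eq_proj μ hsub2
  have hb3 := bias_eq_proj μ (Finset.Subset.refl T)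
  rw [lift1] at hb1
  rw [lift2] at hb2
  rw [lift3] at hb3
  set p : ({x // x ∈ T} → Bool) → ℝ := projDist μ T with hp
  set u : ({x // x ∈ T} → Bool) → ℝ := unif ({x // x ∈ T} → Bool) with hu
  -- signs
  set s1 : ℝ := if 0 ≤ bias μ {i} then 1 else -1 with hs1def
  set s2 : ℝ := if 0 ≤ bias μ {j} then 1 else -1 with hs2def
  set s3 : ℝ := if 0 ≤ bias μ T then 1 else -1 with hs3def
  have hs1 : s1 = 1 ∨ s1 = -1 := by rw [hs1def]; split <;> simp
  have hs2 : s2 = 1 ∨ s2 = -1 := by rw [hs2def]; split <;> simp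
  have hs3 : s3 = 1 ∨ s3 = -1 := by rw [hs3def]; split <;> simp
  have habs1 : |bias μ {i}| = s1 * bias μ {i} := by
    rw [hs1def]; split
    · rw [abs_of_nonneg (by assumption), one_mul]
    · rw [abs_of_neg (by linarith [lt_of_not_ge (by assumption)])]; ring
  have habs2 : |bias μ {j}| = s2 * bias μ {j} := by
    rw [hs2def]; split
    · rw [abs_of_nonneg (by assumption), one_mul]
    · rw [abs_of_neg (by linarith [lt_of_not_ge (by assumption)])]; ring
  have habs3 : |bias μ T| = s3 * bias μ T := by
    rw [hs3def]; split
    · rw [abs_of_nonneg (by assumption), one_mul]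
    · rw [abs_of_neg (by linarith [lt_of_not_ge (by assumption)])]; ring
  set F : ({x // x ∈ T} → Bool) → ℝ :=
    fun w => s1 * chi {I} w + s2 * chi {J} w + s3 * chi {I, J} w with hF
  set m : ℝ := s1 * s2 * s3 with hm
  -- pointwise bound
  have hpt : ∀ w, |F w - m| = 2 := by
    intro w
    simp only [hF, hm]
    have e1 : chi ({I} : Finset {x // x ∈ T}) w = eps (w I) := by
      rw [chi, Finset.prod_singleton]
    have e2 : chi ({J} : Finset {x // x ∈ T}) w = eps (w J) := by
      rw [chi, Finset.prod_singleton]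
    have e3 : chi ({I, J} : Finset {x // x ∈ T}) w = eps (w I) * eps (w J) := by
      rw [chi, Finset.prod_pair hIJ]
    rw [e1, e2, e3]
    exact signF_abs s1 s2 s3 hs1 hs2 hs3 (w I) (w J)
  -- sum of F vanishes
  have hsumF : ∑ w, F w = 0 := by
    rw [hF]
    rw [Finset.sum_add_distrib, Finset.sum_add_distrib, ← Finset.mul_sum, ← Finset.mul_sum,
      ← Finset.mul_sum]
    rw [sum_chi _ (Finset.singleton_nonempty I), sum_chi _ (Finset.singleton_nonempty J),
      sum_chi _ (Finset.insert_nonempty I {J})]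
    ring
  have hsump : ∑ w, p w = 1 := by rw [hp, sum_projDist, hμ.2]
  have hsumu : ∑ w, u w = 1 := sum_unif_one
  have huF : ∑ w, u w * F w = 0 := by
    have : ∀ w, u w = (Fintype.card ({x // x ∈ T} → Bool) : ℝ)⁻¹ := fun _ => rfl
    rw [Finset.sum_congr rfl fun w _ => by rw [this w], ← Finset.mul_sum, hsumF, mul_zero]
  -- main identity
  have hid : |bias μ {i}| + |bias μ {j}| + |bias μ T|
      = ∑ w, (p w - u w) * (F w - m) := by
    have expand : ∑ w, (p w - u w) * (F w - m)
        = (∑ w, p w * F w) - m * (∑ w, p w) - (∑ w, u w * F w) + m * (∑ w, u w) := by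
      rw [Finset.mul_sum, Finset.mul_sum, ← Finset.sum_sub_distrib, ← Finset.sum_sub_distrib,
        ← Finset.sum_add_distrib]
      exact Finset.sum_congr rfl fun w _ => by ring
    rw [expand, hsump, hsumu, huF]
    have hpF : ∑ w, p w * F w = s1 * bias μ {i} + s2 * bias μ {j} + s3 * bias μ T := by
      rw [hb1, hb2, hb3, hF]
      rw [Finset.mul_sum, Finset.mul_sum, Finset.mul_sum, ← Finset.sum_add_distrib,
        ← Finset.sum_add_distrib]
      exact Finset.sum_congr rfl fun w _ => by ring
    rw [hpF, habs1, habs2, habs3]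
    ring
  rw [hid]
  calc ∑ w, (p w - u w) * (F w - m) ≤ |∑ w, (p w - u w) * (F w - m)| := le_abs_self _
    _ ≤ ∑ w, |(p w - u w) * (F w - m)| := Finset.abs_sum_le_sum_abs _ _
    _ = ∑ w, |p w - u w| * 2 := by
        refine Finset.sum_congr rfl fun w _ => ?_
        rw [abs_mul, hpt w]
    _ = 2 * (2 * SD p u) := by rw [← Finset.sum_mul, SD]; ring
    _ ≤ 4 * γ := by
        have : SD p u ≤ γ := hSD
        linarith

lemma pair_eq_pair_iff' {α : Type*} [DecidableEq α] {a b i j : α} (hab : a ≠ b) :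
    ({a, b} : Finset α) = {i, j} ↔ (a = i ∧ b = j) ∨ (a = j ∧ b = i) := by
  constructor
  · intro h
    have ha : a ∈ ({i, j} : Finset α) := h ▸ Finset.mem_insert_self a {b}
    have hb : b ∈ ({i, j} : Finset α) := h ▸ (by simp : b ∈ ({a, b} : Finset α))
    simp only [Finset.mem_insert, Finset.mem_singleton] at ha hb
    rcases ha with rfl|rfl <;> rcases hb with h'|h' <;> tauto
  · rintro (⟨rfl, rfl⟩ | ⟨rfl, rfl⟩)
    · rfl
    · exact Finset.pair_comm a b

lemma sum_pair_double {n : ℕ} (f : Finset (Fin n) → ℝ) :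
    ∑ i, ∑ j ∈ Finset.univ.erase i, f {i, j}
      = 2 * ∑ S ∈ Finset.powersetCard 2 (Finset.univ : Finset (Fin n)), f S := by
  classical
  set D : Finset (Fin n × Fin n) :=
    (Finset.univ ×ˢ Finset.univ).filter (fun p => p.2 ≠ p.1) with hD
  have step1 : ∑ i, ∑ j ∈ Finset.univ.erase i, f {i, j} = ∑ p ∈ D, f {p.1, p.2} := by
    rw [hD, Finset.sum_filter, Finset.sum_product]
    refine Finset.sum_congr rfl fun i _ => ?_
    rw [← Finset.sum_filter]
    refine Finset.sum_congr ?_ fun j _ => rfl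
    ext j
    simp [Finset.mem_erase, eq_comm]
  have maps : ∀ p ∈ D, ({p.1, p.2} : Finset (Fin n)) ∈
      Finset.powersetCard 2 (Finset.univ : Finset (Fin n)) := by
    intro p hp
    rw [Finset.mem_powersetCard]
    have hne : p.2 ≠ p.1 := (Finset.mem_filter.mp hp).2
    exact ⟨Finset.subset_univ _, Finset.card_pair (Ne.symm hne)⟩
  have step2 : ∑ p ∈ D, f {p.1, p.2}
      = ∑ S ∈ Finset.powersetCard 2 (Finset.univ : Finset (Fin n)),
          ∑ p ∈ D.filter (fun p => ({p.1, p.2} : Finset (Fin n)) = S), f {p.1, p.2} :=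
    (Finset.sum_fiberwise_of_maps_to maps _).symm
  have fibcard : ∀ S ∈ Finset.powersetCard 2 (Finset.univ : Finset (Fin n)),
      ∑ p ∈ D.filter (fun p => ({p.1, p.2} : Finset (Fin n)) = S), f {p.1, p.2} = 2 * f S := by
    intro S hS
    obtain ⟨i, j, hij, rfl⟩ := Finset.card_eq_two.mp (Finset.mem_powersetCard.mp hS).2
    have hfib : D.filter (fun p => ({p.1, p.2} : Finset (Fin n)) = {i, j})
        = ({(i, j), (j, i)} : Finset (Fin n × Fin n)) := by
      ext p
      simp only [hD, Finset.mem_filter, Finset.mem_product, Finset.mem_univ, true_and,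
        Finset.mem_insert, Finset.mem_singleton]
      constructor
      · rintro ⟨hne, heq⟩
        rcases (pair_eq_pair_iff' (Ne.symm hne)).mp heq with ⟨h1, h2⟩ | ⟨h1, h2⟩
        · left; exact Prod.ext h1 h2
        · right; exact Prod.ext h1 h2
      · rintro (rfl | rfl)
        · exact ⟨Ne.symm hij, rfl⟩
        · refine ⟨hij, Finset.pair_comm j i⟩
    rw [hfib]
    rw [Finset.sum_insert (by simp [Prod.ext_iff, hij])]
    rw [Finset.sum_singleton]
    have e1 : ({i, j} : Finset (Fin n)) = {i, j} := rfl
    have e2 : ({j, i} : Finset (Fin n)) = {i, j} := Finset.pair_comm j i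
    rw [e2]
    ring
  rw [step1, step2, Finset.sum_congr rfl fibcard, ← Finset.mul_sum]

lemma Acost_two_split {n : ℕ} (μ : BS n → ℝ) :
    Acost μ (Sfam n 2) = (∑ i, |bias μ {i}|)
      + ∑ S ∈ Finset.powersetCard 2 (Finset.univ : Finset (Fin n)), |bias μ S| := by
  unfold Acost Sfam
  rw [Finset.sum_biUnion]
  · rw [show (Finset.Icc 1 2 : Finset ℕ) = {1, 2} from rfl]
    rw [Finset.sum_insert (by norm_num), Finset.sum_singleton]
    congr 1
    rw [Finset.powersetCard_one]
    rw [Finset.sum_map]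
    rfl
  · intro s _ s' _ hne
    rw [Function.onFun, Finset.disjoint_left]
    intro S hS hS'
    exact hne ((Finset.mem_powersetCard.mp hS).2.symm.trans (Finset.mem_powersetCard.mp hS').2)

lemma Acost_two_bound {n : ℕ} (μ : BS n → ℝ) (hμ : IsDist μ) {γ : ℝ} (hγ : 0 ≤ γ) (hn : 2 ≤ n)
    (h : ∀ T : Finset (Fin n), T.card = 2 →
      SD (projDist μ T) (unif ({x // x ∈ T} → Bool)) ≤ γ) :
    Acost μ (Sfam n 2) ≤ (n : ℝ) ^ 2 * γ := by
  classical
  set qv : Fin n → ℝ := fun i => |bias μ {i}| with hqv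
  set Q : ℝ := ∑ i, qv i with hQ
  set P : ℝ := ∑ S ∈ Finset.powersetCard 2 (Finset.univ : Finset (Fin n)), |bias μ S| with hP
  have hQ0 : 0 ≤ Q := Finset.sum_nonneg fun i _ => abs_nonneg _
  have hsplit : Acost μ (Sfam n 2) = Q + P := Acost_two_split μ
  have hpair : ∀ i j : Fin n, i ≠ j → qv i + qv j + |bias μ {i, j}| ≤ 4 * γ := by
    intro i j hij
    exact pair_bound μ hμ i j hij (h {i, j} (Finset.card_pair hij))
  -- individual bound on pairs
  have hP2 : ∀ S ∈ Finset.powersetCard 2 (Finset.univ : Finset (Fin n)), |bias μ S| ≤ 2 * γ := by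
    intro S hS
    have hcard := (Finset.mem_powersetCard.mp hS).2
    have hne : S.Nonempty := Finset.card_pos.mp (by omega)
    calc |bias μ S| ≤ 2 * SD (projDist μ S) (unif ({x // x ∈ S} → Bool)) :=
          abs_bias_le μ (Finset.Subset.refl S) hne
      _ ≤ 2 * γ := by linarith [h S hcard]
  have hchoose2 : ((Finset.powersetCard 2 (Finset.univ : Finset (Fin n))).card : ℝ) * 2
      = (n : ℝ) * ((n : ℝ) - 1) := by
    rw [Finset.card_powersetCard, Finset.card_univ, Fintype.card_fin]
    have hnat : 2 * n.choose 2 = n * (n - 1) := by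
      have h1 : n.descFactorial 2 = Nat.factorial 2 * n.choose 2 :=
        Nat.descFactorial_eq_factorial_mul_choose n 2
      have h2 : n.descFactorial 2 = (n - 1) * n.descFactorial 1 := Nat.descFactorial_succ n 1
      rw [Nat.descFactorial_one] at h2
      have h4 : Nat.factorial 2 = 2 := rfl
      rw [h4] at h1
      rw [← h1, h2, Nat.mul_comm]
    have hcast : ((2 * n.choose 2 : ℕ) : ℝ) = ((n * (n - 1) : ℕ) : ℝ) := by rw [hnat]
    push_cast [Nat.cast_sub (by omega : 1 ≤ n)] at hcast
    linarith
  have hPle : P ≤ (n : ℝ) * ((n : ℝ) - 1) * γ := by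
    calc P ≤ ∑ _S ∈ Finset.powersetCard 2 (Finset.univ : Finset (Fin n)), 2 * γ :=
          Finset.sum_le_sum hP2
      _ = ((Finset.powersetCard 2 (Finset.univ : Finset (Fin n))).card : ℝ) * (2 * γ) := by
          rw [Finset.sum_const, nsmul_eq_mul]
      _ = (n : ℝ) * ((n : ℝ) - 1) * γ := by rw [← mul_assoc, hchoose2]
  -- double counted inequality
  have hdouble : ((n : ℝ) - 1) * Q + (((n : ℝ) * Q - Q) + 2 * P) ≤ 4 * γ * ((n:ℝ) * ((n:ℝ) - 1)) := by
    have hsum : ∑ i, ∑ j ∈ Finset.univ.erase i, (qv i + qv j + |bias μ {i, j}|)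
        ≤ ∑ i : Fin n, ∑ _j ∈ Finset.univ.erase i, 4 * γ := by
      refine Finset.sum_le_sum fun i _ => Finset.sum_le_sum fun j hj => ?_
      exact hpair i j (Ne.symm (Finset.mem_erase.mp hj).1)
    have hrhs : ∑ i : Fin n, ∑ _j ∈ Finset.univ.erase i, (4 * γ)
        = 4 * γ * ((n:ℝ) * ((n:ℝ) - 1)) := by
      have hcard : ∀ i : Fin n, (Finset.univ.erase i).card = n - 1 := by
        intro i
        rw [Finset.card_erase_of_mem (Finset.mem_univ i), Finset.card_univ, Fintype.card_fin]
      rw [Finset.sum_congr rfl fun i _ => by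
        rw [Finset.sum_const, hcard i, nsmul_eq_mul]]
      rw [Finset.sum_const, Finset.card_univ, Fintype.card_fin, nsmul_eq_mul]
      rw [Nat.cast_sub (by omega : 1 ≤ n)]
      push_cast
      ring
    have hlhs : ∑ i, ∑ j ∈ Finset.univ.erase i, (qv i + qv j + |bias μ {i, j}|)
        = ((n : ℝ) - 1) * Q + (((n : ℝ) * Q - Q) + 2 * P) := by
      have e1 : ∑ i, ∑ _j ∈ Finset.univ.erase i, qv i = ((n : ℝ) - 1) * Q := by
        rw [Finset.sum_congr rfl fun i _ => by
          rw [Finset.sum_const, Finset.card_erase_of_mem (Finset.mem_univ i),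
            Finset.card_univ, Fintype.card_fin, nsmul_eq_mul]]
        rw [← Finset.mul_sum, ← hQ]
        rw [Nat.cast_sub (by omega : 1 ≤ n)]
        push_cast
        ring
      have e2 : ∑ i : Fin n, ∑ j ∈ Finset.univ.erase i, qv j = (n : ℝ) * Q - Q := by
        have : ∀ i : Fin n, ∑ j ∈ Finset.univ.erase i, qv j = Q - qv i := by
          intro i
          rw [hQ, Finset.sum_erase_eq_sub (Finset.mem_univ i)]
        rw [Finset.sum_congr rfl fun i _ => this i, Finset.sum_sub_distrib,
          Finset.sum_const, Finset.card_univ, Fintype.card_fin, nsmul_eq_mul, ← hQ]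
      have e3 : ∑ i, ∑ j ∈ Finset.univ.erase i, |bias μ {i, j}| = 2 * P := by
        rw [hP]
        exact sum_pair_double (fun S => |bias μ S|)
      calc ∑ i, ∑ j ∈ Finset.univ.erase i, (qv i + qv j + |bias μ {i, j}|)
          = (∑ i, ∑ _j ∈ Finset.univ.erase i, qv i)
            + (∑ i, ∑ j ∈ Finset.univ.erase i, qv j)
            + (∑ i, ∑ j ∈ Finset.univ.erase i, |bias μ {i, j}|) := by
            rw [← Finset.sum_add_distrib, ← Finset.sum_add_distrib]
            refine Finset.sum_congr rfl fun i _ => ?_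
            rw [← Finset.sum_add_distrib, ← Finset.sum_add_distrib]
        _ = ((n : ℝ) - 1) * Q + (((n : ℝ) * Q - Q) + 2 * P) := by rw [e1, e2, e3]; ring
    linarith [hsum, hlhs ▸ hsum, hrhs]
  rw [hsplit]
  have hn' : (2 : ℝ) ≤ (n : ℝ) := by exact_mod_cast hn
  rcases le_or_gt Q ((n : ℝ) * γ) with hc | hc
  · nlinarith
  · nlinarith

-- ### Stage 6: the t = 1 case, mass transport

section Transport

variable {n : ℕ}

/-- mass on the side `x i = b` -/
def margb (i : Fin n) (b : Bool) (ρ : BS n → ℝ) : ℝ := ∑ x, if x i = b then ρ x else 0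

def shiftD (i : Fin n) (b : Bool) (δ : ℝ) (ρ : BS n → ℝ) : BS n → ℝ :=
  fun x => if x i = b then ρ x + δ * ρ (flip i x) else (1 - δ) * ρ x

lemma margb_nonneg (i : Fin n) (b : Bool) (ρ : BS n → ℝ) (hρ : ∀ x, 0 ≤ ρ x) :
    0 ≤ margb i b ρ := by
  refine Finset.sum_nonneg fun x _ => ?_
  split
  · exact hρ x
  · exact le_refl 0

lemma margb_le_total (i : Fin n) (b : Bool) (ρ : BS n → ℝ) (hρ : ∀ x, 0 ≤ ρ x) :
    margb i b ρ ≤ ∑ x, ρ x := by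
  refine Finset.sum_le_sum fun x _ => ?_
  split
  · exact le_refl _
  · exact hρ x

lemma margb_add (i : Fin n) (ρ : BS n → ℝ) :
    margb i true ρ + margb i false ρ = ∑ x, ρ x := by
  unfold margb
  rw [← Finset.sum_add_distrib]
  refine Finset.sum_congr rfl fun x _ => ?_
  cases hx : x i <;> simp [hx]

lemma shiftD_sub (i : Fin n) (b : Bool) (δ : ℝ) (ρ : BS n → ℝ) (x : BS n) :
    shiftD i b δ ρ x - ρ x
      = if x i = b then δ * ρ (flip i x) else -(δ * ρ x) := by
  unfold shiftD
  split <;> ring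

lemma shiftD_sub_flip (i : Fin n) (b : Bool) (δ : ℝ) (ρ : BS n → ℝ) (x : BS n) :
    shiftD i b δ ρ (flip i x) - ρ (flip i x) = -(shiftD i b δ ρ x - ρ x) := by
  rw [shiftD_sub, shiftD_sub]
  by_cases hx : x i = b
  · rw [if_pos hx, if_neg (by rw [flip_apply_self, hx]; simp)]
  · have hx' : x i = !b := by cases hxv : x i <;> cases b <;> simp_all
    rw [if_neg hx, if_pos (by rw [flip_apply_self, hx']; simp), flip_involutive i x]
    ring

lemma sum_mul_shiftD (i : Fin n) (b : Bool) (δ : ℝ) (ρ : BS n → ℝ) (g : BS n → ℝ)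
    (hg : ∀ x, g (flip i x) = g x) :
    ∑ x, g x * shiftD i b δ ρ x = ∑ x, g x * ρ x := by
  have hzero : ∑ x, g x * (shiftD i b δ ρ x - ρ x) = 0 := by
    refine sum_eq_zero_of_flip_neg (i := i) fun x => ?_
    rw [hg x, shiftD_sub_flip]
    ring
  have : ∑ x, g x * shiftD i b δ ρ x - ∑ x, g x * ρ x = 0 := by
    rw [← Finset.sum_sub_distrib, ← hzero]
    exact Finset.sum_congr rfl fun x _ => by ring
  linarith

lemma sum_shiftD (i : Fin n) (b : Bool) (δ : ℝ) (ρ : BS n → ℝ) :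
    ∑ x, shiftD i b δ ρ x = ∑ x, ρ x := by
  have := sum_mul_shiftD i b δ ρ (fun _ => 1) (fun _ => rfl)
  simpa using this

lemma margb_shiftD_other (i : Fin n) (b : Bool) (δ : ℝ) (ρ : BS n → ℝ) (j : Fin n)
    (hji : j ≠ i) (b' : Bool) :
    margb j b' (shiftD i b δ ρ) = margb j b' ρ := by
  have hg : ∀ x : BS n, (if x j = b' then (1:ℝ) else 0) * shiftD i b δ ρ x
      = (if x j = b' then shiftD i b δ ρ x else 0) := by
    intro x; split <;> ring
  have hg' : ∀ x : BS n, (if x j = b' then (1:ℝ) else 0) * ρ x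
      = (if x j = b' then ρ x else 0) := by
    intro x; split <;> ring
  unfold margb
  rw [← Finset.sum_congr rfl fun x _ => hg x, ← Finset.sum_congr rfl fun x _ => hg' x]
  refine sum_mul_shiftD i b δ ρ _ fun x => ?_
  rw [flip_apply_ne i j x hji]

lemma sum_flip_ite (i : Fin n) (b : Bool) (ρ : BS n → ℝ) :
    ∑ x, (if x i = b then ρ (flip i x) else 0) = margb i (!b) ρ := by
  have : ∀ x : BS n, (if x i = b then ρ (flip i x) else 0)
      = (fun y => if y i = !b then ρ y else 0) (flip i x) := by
    intro x
    simp only [flip_apply_self]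
    by_cases hx : x i = b
    · rw [if_pos hx, if_pos (by rw [hx])]
    · rw [if_neg hx, if_neg (by intro hc; apply hx; cases hxv : x i <;> cases b <;> simp_all)]
  rw [Finset.sum_congr rfl fun x _ => this x]
  exact sum_flip i (fun y => if y i = !b then ρ y else 0)

lemma margb_shiftD_self (i : Fin n) (b : Bool) (δ : ℝ) (ρ : BS n → ℝ) :
    margb i b (shiftD i b δ ρ) = margb i b ρ + δ * margb i (!b) ρ := by
  unfold margb shiftD
  have : ∀ x : BS n, (if x i = b then (if x i = b then ρ x + δ * ρ (flip i x) else (1-δ) * ρ x) else 0)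
      = (if x i = b then ρ x else 0) + δ * (if x i = b then ρ (flip i x) else 0) := by
    intro x
    by_cases hx : x i = b <;> simp [hx]
  rw [Finset.sum_congr rfl fun x _ => this x, Finset.sum_add_distrib, ← Finset.mul_sum]
  rw [sum_flip_ite]
  rfl

lemma abs_shiftD (i : Fin n) (b : Bool) (δ : ℝ) (ρ : BS n → ℝ) (hρ : ∀ x, 0 ≤ ρ x)
    (hδ : 0 ≤ δ) :
    ∑ x, |shiftD i b δ ρ x - ρ x| = 2 * δ * margb i (!b) ρ := by
  have key : ∀ x : BS n, |shiftD i b δ ρ x - ρ x|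
      = δ * (if x i = b then ρ (flip i x) else 0) + δ * (if x i = !b then ρ x else 0) := by
    intro x
    rw [shiftD_sub]
    by_cases hx : x i = b
    · have hx' : ¬ (x i = !b) := by rw [hx]; simp
      rw [if_pos hx, if_pos hx, if_neg hx']
      rw [abs_of_nonneg (mul_nonneg hδ (hρ _))]
      ring
    · have hx' : x i = !b := by cases hxv : x i <;> cases b <;> simp_all
      rw [if_neg hx, if_neg hx, if_pos hx']
      rw [abs_neg, abs_of_nonneg (mul_nonneg hδ (hρ _))]
      ring
  rw [Finset.sum_congr rfl fun x _ => key x, Finset.sum_add_distrib, ← Finset.mul_sum,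
    ← Finset.mul_sum, sum_flip_ite]
  have : ∑ x, (if x i = !b then ρ x else 0) = margb i (!b) ρ := rfl
  rw [this]
  ring

lemma shiftD_nonneg (i : Fin n) (b : Bool) (δ : ℝ) (ρ : BS n → ℝ) (hρ : ∀ x, 0 ≤ ρ x)
    (hδ : 0 ≤ δ) (hδ1 : δ ≤ 1) (x : BS n) : 0 ≤ shiftD i b δ ρ x := by
  unfold shiftD
  split
  · have := hρ x
    have := hρ (flip i x)
    nlinarith
  · have := hρ x
    nlinarith

/-- fix the marginal of coordinate `i` to be uniform -/
def fixCoord (i : Fin n) (ρ : BS n → ℝ) : BS n → ℝ :=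
  if margb i true ρ ≤ 1/2 then
    shiftD i true ((1/2 - margb i true ρ) / (1 - margb i true ρ)) ρ
  else
    shiftD i false ((margb i true ρ - 1/2) / (margb i true ρ)) ρ

lemma fixCoord_spec (i : Fin n) (ρ : BS n → ℝ) (hρ : IsDist ρ) :
    IsDist (fixCoord i ρ) ∧ margb i true (fixCoord i ρ) = 1/2 ∧
    (∀ j, j ≠ i → ∀ b', margb j b' (fixCoord i ρ) = margb j b' ρ) ∧
    SD ρ (fixCoord i ρ) ≤ |margb i true ρ - 1/2| := by
  have h0 : 0 ≤ margb i true ρ := margb_nonneg i true ρ hρ.1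
  have h1 : margb i true ρ ≤ 1 := by
    have := margb_le_total i true ρ hρ.1
    rw [hρ.2] at this
    exact this
  have hadd : margb i true ρ + margb i false ρ = 1 := by
    rw [margb_add, hρ.2]
  set m := margb i true ρ with hm
  by_cases hcase : m ≤ 1/2
  · -- shift toward `true`
    have hden : (0:ℝ) < 1 - m := by linarith
    set δ := (1/2 - m) / (1 - m) with hδdef
    have hδ0 : 0 ≤ δ := div_nonneg (by linarith) (by linarith)
    have hδ1 : δ ≤ 1 := by
      rw [div_le_one hden]
      linarith
    have hfc : fixCoord i ρ = shiftD i true δ ρ := by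
      rw [fixCoord, if_pos hcase]
    have hmf : margb i false ρ = 1 - m := by linarith
    have hmargT : margb i true (fixCoord i ρ) = 1/2 := by
      rw [hfc, margb_shiftD_self]
      have : (!true) = false := rfl
      rw [this, hmf, ← hm, hδdef]
      field_simp
      ring
    refine ⟨⟨?_, ?_⟩, hmargT, ?_, ?_⟩
    · intro x
      rw [hfc]
      exact shiftD_nonneg i true δ ρ hρ.1 hδ0 hδ1 x
    · rw [hfc, sum_shiftD, hρ.2]
    · intro j hji b'
      rw [hfc, margb_shiftD_other i true δ ρ j hji b']
    · rw [hfc, SD]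
      have : ∀ x : BS n, |ρ x - shiftD i true δ ρ x| = |shiftD i true δ ρ x - ρ x| :=
        fun x => abs_sub_comm _ _
      rw [Finset.sum_congr rfl fun x _ => this x, abs_shiftD i true δ ρ hρ.1 hδ0]
      have hb : (!true) = false := rfl
      rw [hb, hmf]
      have hdm : δ * (1 - m) = 1/2 - m := div_mul_cancel₀ _ (ne_of_gt hden)
      calc 2 * δ * (1 - m) / 2 = δ * (1 - m) := by ring
        _ = 1/2 - m := hdm
        _ ≤ |m - 1/2| := by rw [abs_of_nonpos (by linarith : m - 1/2 ≤ 0)]; linarith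
  · -- shift toward `false`
    push_neg at hcase
    have hden : (0:ℝ) < m := by linarith
    set δ := (m - 1/2) / m with hδdef
    have hδ0 : 0 ≤ δ := div_nonneg (by linarith) (by linarith)
    have hδ1 : δ ≤ 1 := by
      rw [div_le_one hden]
      linarith
    have hfc : fixCoord i ρ = shiftD i false δ ρ := by
      rw [fixCoord, if_neg (by linarith)]
    have hmf : margb i false ρ = 1 - m := by linarith
    have htotal : ∑ x, fixCoord i ρ x = 1 := by
      rw [hfc, sum_shiftD, hρ.2]
    have hmargF : margb i false (fixCoord i ρ) = 1/2 := by
      rw [hfc, margb_shiftD_self]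
      have : (!false) = true := rfl
      rw [this, hmf, ← hm, hδdef]
      field_simp
      ring
    have hmargT : margb i true (fixCoord i ρ) = 1/2 := by
      have := margb_add i (fixCoord i ρ)
      rw [htotal, hmargF] at this
      linarith
    refine ⟨⟨?_, htotal⟩, hmargT, ?_, ?_⟩
    · intro x
      rw [hfc]
      exact shiftD_nonneg i false δ ρ hρ.1 hδ0 hδ1 x
    · intro j hji b'
      rw [hfc, margb_shiftD_other i false δ ρ j hji b']
    · rw [hfc, SD]
      have : ∀ x : BS n, |ρ x - shiftD i false δ ρ x| = |shiftD i false δ ρ x - ρ x| :=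
        fun x => abs_sub_comm _ _
      rw [Finset.sum_congr rfl fun x _ => this x, abs_shiftD i false δ ρ hρ.1 hδ0]
      have hb : (!false) = true := rfl
      rw [hb, ← hm]
      have hdm : δ * m = m - 1/2 := div_mul_cancel₀ _ (ne_of_gt hden)
      calc 2 * δ * m / 2 = δ * m := by ring
        _ = m - 1/2 := hdm
        _ ≤ |m - 1/2| := le_abs_self _

def fixAll : List (Fin n) → (BS n → ℝ) → (BS n → ℝ)
  | [], ρ => ρ
  | i :: L, ρ => fixAll L (fixCoord i ρ)

lemma fixAll_spec : ∀ (L : List (Fin n)) (ρ : BS n → ℝ), IsDist ρ →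
    IsDist (fixAll L ρ) ∧
    (∀ j, margb j true (fixAll L ρ) = if j ∈ L then 1/2 else margb j true ρ) ∧
    SD ρ (fixAll L ρ) ≤ (L.map (fun j => |margb j true ρ - 1/2|)).sum := by
  intro L
  induction L with
  | nil =>
    intro ρ hρ
    refine ⟨hρ, fun j => by simp [fixAll], ?_⟩
    simp [fixAll, SD_self]
  | cons i L IH =>
    intro ρ hρ
    obtain ⟨hfc1, hfc2, hfc3, hfc4⟩ := fixCoord_spec i ρ hρ
    obtain ⟨h1, h2, h3⟩ := IH (fixCoord i ρ) hfc1
    have hfa : fixAll (i :: L) ρ = fixAll L (fixCoord i ρ) := rfl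
    refine ⟨hfa ▸ h1, ?_, ?_⟩
    · intro j
      rw [hfa, h2 j]
      by_cases hjL : j ∈ L
      · simp [hjL, List.mem_cons]
      · by_cases hji : j = i
        · subst hji
          simp only [hjL, if_false, List.mem_cons, true_or, if_true, hfc2]
        · simp only [hjL, if_false, List.mem_cons, hji, false_or, if_false]
          exact hfc3 j hji true
    · rw [hfa]
      calc SD ρ (fixAll L (fixCoord i ρ))
          ≤ SD ρ (fixCoord i ρ) + SD (fixCoord i ρ) (fixAll L (fixCoord i ρ)) :=
            SD_triangle _ _ _
        _ ≤ |margb i true ρ - 1/2|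
            + (L.map (fun j => |margb j true (fixCoord i ρ) - 1/2|)).sum := by
            linarith [hfc4, h3]
        _ ≤ |margb i true ρ - 1/2| + (L.map (fun j => |margb j true ρ - 1/2|)).sum := by
            have : ∀ j ∈ L, |margb j true (fixCoord i ρ) - 1/2| ≤ |margb j true ρ - 1/2| := by
              intro j hj
              by_cases hji : j = i
              · subst hji
                rw [hfc2]
                simp
              · rw [hfc3 j hji true]
            have hmap := List.sum_le_sum (l := L)
              (f := fun j => |margb j true (fixCoord i ρ) - 1/2|)
              (g := fun j => |margb j true ρ - 1/2|) this
            linarith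
        _ = ((i :: L).map (fun j => |margb j true ρ - 1/2|)).sum := by
            simp [List.map_cons, List.sum_cons]

lemma bias_singleton (ρ : BS n → ℝ) (j : Fin n) :
    bias ρ {j} = (∑ x, ρ x) - 2 * margb j true ρ := by
  unfold bias margb
  have key : ∀ x : BS n, ρ x * chi {j} x = ρ x - 2 * (if x j = true then ρ x else 0) := by
    intro x
    rw [chi, Finset.prod_singleton]
    cases hx : x j <;> simp [eps, hx] <;> ring
  rw [Finset.sum_congr rfl fun x _ => key x, Finset.sum_sub_distrib, ← Finset.mul_sum]

end Transport

end AGMaux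

open AGMaux

/-- Alon–Goldreich–Mansour: every `(t, γ)`-wise independent distribution on `{0,1}^n`
is `n^t γ`-close to some exactly `t`-wise independent distribution. -/
theorem stmt11 (n t : ℕ) (γ : ℝ) (hγ : 0 ≤ γ)
    (μ : (Fin n → Bool) → ℝ) (hμ : IsDist μ)
    (h : ∀ T : Finset (Fin n), T.card = t →
      SD (projDist μ T) (unif ({x // x ∈ T} → Bool)) ≤ γ) :
    ∃ ν : (Fin n → Bool) → ℝ, IsDist ν ∧
      (∀ T : Finset (Fin n), T.card = t → projDist ν T = unif ({x // x ∈ T} → Bool)) ∧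
      SD μ ν ≤ (n : ℝ) ^ t * γ := by
  classical
  by_cases ht0 : t = 0
  · subst ht0
    refine ⟨μ, hμ, ?_, ?_⟩
    · intro T hT
      rw [Finset.card_eq_zero] at hT
      subst hT
      refine proj_eq_unif μ ∅ hμ.2 ?_
      intro S hS hSne
      rw [Finset.subset_empty] at hS
      exact absurd hS hSne.ne_empty
    · calc SD μ μ = 0 := SD_self μ
        _ ≤ (n : ℝ) ^ 0 * γ := by positivity
  by_cases htn : t ≤ n
  swap
  · refine ⟨μ, hμ, ?_, ?_⟩
    · intro T hT
      exfalso
      have := Finset.card_le_univ T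
      rw [Fintype.card_fin] at this
      omega
    · calc SD μ μ = 0 := SD_self μ
        _ ≤ (n : ℝ) ^ t * γ := by positivity
  · have hkey : ∀ S : Finset (Fin n), S.Nonempty → S.card ≤ t → |bias μ S| ≤ 2 * γ := by
      intro S hSne hScard
      have hn' : t ≤ (Finset.univ : Finset (Fin n)).card := by
        rw [Finset.card_univ, Fintype.card_fin]; exact htn
      obtain ⟨T, hST, _, hTcard⟩ :=
        Finset.exists_subsuperset_card_eq (Finset.subset_univ S) hScard hn'
      calc |bias μ S|
          ≤ 2 * SD (projDist μ T) (unif ({x // x ∈ T} → Bool)) := abs_bias_le μ hST hSne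
        _ ≤ 2 * γ := by linarith [h T hTcard]
    by_cases ht1 : t = 1
    · subst ht1
      have hm : ∀ i : Fin n, |margb i true μ - 1/2| ≤ γ := by
        intro i
        have hb := hkey {i} (Finset.singleton_nonempty i) (by simp)
        rw [bias_singleton, hμ.2] at hb
        have h2 : (1 : ℝ) - 2 * margb i true μ = -2 * (margb i true μ - 1/2) := by ring
        rw [h2, abs_mul] at hb
        have h3 : |(-2 : ℝ)| = 2 := by norm_num
        rw [h3] at hb
        linarith
      set ν := fixAll (List.finRange n) μ with hν
      obtain ⟨hd, hmarg, hSDb⟩ := fixAll_spec (List.finRange n) μ hμ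
      refine ⟨ν, hd, ?_, ?_⟩
      · intro T hT
        obtain ⟨j, rfl⟩ := Finset.card_eq_one.mp hT
        refine proj_eq_unif ν {j} hd.2 ?_
        intro S hS hSne
        rcases Finset.subset_singleton_iff.mp hS with rfl | rfl
        · exact absurd rfl hSne.ne_empty
        · rw [bias_singleton, hd.2, hmarg j, if_pos (List.mem_finRange j)]
          norm_num
      · calc SD μ ν ≤ ((List.finRange n).map (fun j => |margb j true μ - 1/2|)).sum := hSDb
          _ ≤ (n : ℝ) * γ := by
              have hle := List.sum_le_card_nsmul
                ((List.finRange n).map (fun j => |margb j true μ - 1/2|)) γ ?_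
              · have hlen : ((List.finRange n).map
                    (fun j => |margb j true μ - 1/2|)).length = n := by simp
                rw [hlen, nsmul_eq_mul] at hle
                exact hle
              · intro x hx
                obtain ⟨j, _, rfl⟩ := List.mem_map.mp hx
                exact hm j
          _ = (n : ℝ) ^ 1 * γ := by rw [pow_one]
    · have ht2 : 2 ≤ t := by omega
      set 𝒮 := Sfam n t with h𝒮
      have h𝒮ne : ∀ S ∈ 𝒮, S.Nonempty := Sfam_nonempty
      set ν := nu μ 𝒮 with hν
      have hd : IsDist ν := isDist_nu μ 𝒮 hμ h𝒮ne
      have hproj : ∀ T : Finset (Fin n), T.card = t →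
          projDist ν T = unif ({x // x ∈ T} → Bool) := by
        intro T hT
        refine proj_eq_unif ν T hd.2 ?_
        intro S hS hSne
        refine bias_nu_eq_zero μ 𝒮 h𝒮ne ?_
        rw [h𝒮, mem_Sfam]
        exact ⟨hSne, le_trans (Finset.card_le_card hS) (le_of_eq hT)⟩
      refine ⟨ν, hd, hproj, ?_⟩
      have hSDle := SD_nu_le μ 𝒮 hμ h𝒮ne
      have hAb : Acost μ 𝒮 ≤ (n : ℝ) ^ t * γ := by
        by_cases ht2' : t = 2
        · subst ht2'
          exact Acost_two_bound μ hμ hγ (by omega) h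
        · have ht3 : 3 ≤ t := by omega
          have hn3 : 3 ≤ n := by omega
          have hcard := Acost_le μ 𝒮 (fun S hS => hkey S (h𝒮ne S hS) (mem_Sfam.mp hS).2)
          rw [h𝒮, card_Sfam] at hcard
          have hnat := nat_bound n t ht3 hn3
          have hcast : ((∑ s ∈ Finset.Icc 1 t, n.choose s : ℕ) : ℝ) * (2 * γ)
              ≤ (n : ℝ) ^ t * γ := by
            have h2 : ((2 * (∑ s ∈ Finset.Icc 1 t, n.choose s) : ℕ) : ℝ)
                ≤ ((n ^ t : ℕ) : ℝ) := by exact_mod_cast hnat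
            rw [Nat.cast_mul, Nat.cast_pow] at h2
            have h3 : (((2:ℕ)) : ℝ) = 2 := by norm_num
            rw [h3] at h2
            nlinarith [hγ]
          calc Acost μ 𝒮 ≤ _ := hcard
            _ ≤ (n : ℝ) ^ t * γ := hcast
      linarith [hSDle, hAb]
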